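/- Let d, d' be positive integers with d ≡ d' ≡ 5 mod 8, and let (α, β, γ) be a primitive triple of positive integers with dα² + d'β² = γ² and α even. Then α/2, β, and γ are all odd. -/

import Mathlib

lemma odd_sq_mod8 (x : ℤ) (h : Odd x) : ∃ m : ℤ, x ^ 2 = 8 * m + 1 := by
  obtain ⟨k, hk⟩ := h
  obtain ⟨m, hm⟩ := Int.even_mul_succ_self k
  exact ⟨m, by subst hk; nlinarith [hm]⟩

/-- for a primitive positive solution of dα² + d'β² = γ² with
d ≡ d' ≡ 5 mod 8 and α even, the integers α/2, β, γ are all odd. -/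
theorem stmt13 (d d' α β γ : ℤ) (hd : 0 < d) (hd' : 0 < d')
    (hα : 0 < α) (hβ : 0 < β) (hγ : 0 < γ)
    (hd8 : d % 8 = 5) (hd'8 : d' % 8 = 5)
    (hprim : Int.gcd (Int.gcd α β) γ = 1)
    (heq : d * α ^ 2 + d' * β ^ 2 = γ ^ 2) (hαeven : Even α) :
    Odd (α / 2) ∧ Odd β ∧ Odd γ := by
  have hdodd : Odd d := by rw [Int.odd_iff]; omega
  have hd'odd : Odd d' := by rw [Int.odd_iff]; omega
  have hβodd : Odd β := by
    by_contra h
    rw [Int.not_odd_iff_even] at h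
    have hγ2 : Even (γ ^ 2) := by
      rw [← heq]
      have h1 : Even (α ^ 2) := Int.even_pow.mpr ⟨hαeven, by norm_num⟩
      have h2 : Even (β ^ 2) := Int.even_pow.mpr ⟨h, by norm_num⟩
      exact Even.add (h1.mul_left d) (h2.mul_left d')
    have hγe : Even γ := by
      rcases Int.even_or_odd γ with he | ho
      · exact he
      · exact absurd hγ2 (Int.not_even_iff_odd.mpr (ho.pow))
    have h2 : (2 : ℤ) ∣ ((Int.gcd (Int.gcd α β) γ : ℕ) : ℤ) :=
      Int.dvd_coe_gcd (Int.dvd_coe_gcd hαeven.two_dvd h.two_dvd) hγe.two_dvd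
    rw [hprim] at h2
    norm_num at h2
  have hγodd : Odd γ := by
    have : Odd (γ ^ 2) := by
      rw [← heq]
      have h1 : Even (α ^ 2) := Int.even_pow.mpr ⟨hαeven, by norm_num⟩
      exact (h1.mul_left d).add_odd (hd'odd.mul hβodd.pow)
    rcases Int.even_or_odd γ with he | ho
    · exact absurd this (Int.not_odd_iff_even.mpr (Int.even_pow.mpr ⟨he, by norm_num⟩))
    · exact ho
  obtain ⟨a, ha⟩ := hαeven
  have hdiv : α / 2 = a := by omega
  rw [hdiv]
  refine ⟨?_, hβodd, hγodd⟩
  by_contra h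
  rw [Int.not_odd_iff_even] at h
  obtain ⟨t, ht⟩ := h
  obtain ⟨m, hm⟩ := odd_sq_mod8 β hβodd
  obtain ⟨n, hn⟩ := odd_sq_mod8 γ hγodd
  have key : 16 * (d * t ^ 2) + 8 * (d' * m) + d' = 8 * n + 1 := by
    have hα4 : α = 4 * t := by omega
    rw [hα4] at heq
    nlinarith [heq, hm, hn]
  omega
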